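/- Let a, b be real numbers with 0 < a ≤ b, let c = √(a² + b²), and let α be a real number with α ≥ g(c, b/c), where g(r,u) := 2·log_{(1+r)u/(1+ru)} u and log_b x denotes the base-b logarithm (ln x)/(ln b). Then for all real x, y with 0 ≤ x ≤ a and 0 ≤ y ≤ b, writing s = √(x² + y²), one has (x/(x+1))^α + (y/(y+1))^α ≤ (s/(s+1))^α. -/

import Mathlib

open Real Set

private lemma hasDeriv_aux (p q : ℝ) {τ : ℝ} (hτ : 0 < τ) :
    HasDerivAt (fun τ : ℝ => p * Real.log (1+τ) - q * Real.log τ)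
      (p * (1/(1+τ)) - q * τ⁻¹) τ := by
  have h1 : HasDerivAt (fun τ : ℝ => 1+τ) 1 τ := (hasDerivAt_id τ).const_add 1
  have h2 : HasDerivAt (fun τ : ℝ => Real.log (1+τ)) (1/(1+τ)) τ :=
    h1.log (by positivity)
  have h3 : HasDerivAt Real.log τ⁻¹ τ := Real.hasDerivAt_log (ne_of_gt hτ)
  exact (h2.const_mul p).sub (h3.const_mul q)

private lemma P1 {u t : ℝ} (hu : 0 < u) (hut : u ≤ t) :
    u * (Real.log t - Real.log u) ≤ (1+u) * (Real.log (1+t) - Real.log (1+u)) := by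
  have hmono : MonotoneOn (fun τ : ℝ => (1+u) * Real.log (1+τ) - u * Real.log τ)
      (Icc u t) := by
    apply monotoneOn_of_deriv_nonneg (convex_Icc u t)
    · intro τ hτ
      exact (hasDeriv_aux (1+u) u (hu.trans_le hτ.1)).continuousAt.continuousWithinAt
    · intro τ hτ
      rw [interior_Icc] at hτ
      exact (hasDeriv_aux (1+u) u (hu.trans hτ.1)).differentiableAt.differentiableWithinAt
    · intro τ hτ
      rw [interior_Icc] at hτ
      have hτ0 : 0 < τ := hu.trans hτ.1
      rw [(hasDeriv_aux (1+u) u hτ0).deriv]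
      rw [sub_nonneg, mul_one_div, ← div_eq_mul_inv, div_le_div_iff₀ hτ0 (by linarith)]
      nlinarith [hτ.1.le]
  have h := hmono (left_mem_Icc.2 hut) (right_mem_Icc.2 hut) hut
  simp only at h
  have e : (1+u)*(Real.log (1+t) - Real.log (1+u)) =
      ((1+u)*Real.log (1+t) - u*Real.log t) - ((1+u)*Real.log (1+u) - u*Real.log u)
        + u*(Real.log t - Real.log u) := by ring
  linarith

private lemma P2 {t s : ℝ} (ht : 0 < t) (hts : t ≤ s) :
    (1+s) * (Real.log (1+s) - Real.log (1+t)) ≤ s * (Real.log s - Real.log t) := by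
  have hanti : AntitoneOn (fun τ : ℝ => (1+s) * Real.log (1+τ) - s * Real.log τ)
      (Icc t s) := by
    apply antitoneOn_of_deriv_nonpos (convex_Icc t s)
    · intro τ hτ
      exact (hasDeriv_aux (1+s) s (ht.trans_le hτ.1)).continuousAt.continuousWithinAt
    · intro τ hτ
      rw [interior_Icc] at hτ
      exact (hasDeriv_aux (1+s) s (ht.trans hτ.1)).differentiableAt.differentiableWithinAt
    · intro τ hτ
      rw [interior_Icc] at hτ
      have hτ0 : 0 < τ := ht.trans hτ.1
      rw [(hasDeriv_aux (1+s) s hτ0).deriv]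
      rw [sub_nonpos, mul_one_div, ← div_eq_mul_inv, div_le_div_iff₀ (by linarith) hτ0]
      nlinarith [hτ.2.le]
  have h := hanti (left_mem_Icc.2 hts) (right_mem_Icc.2 hts) hts
  simp only at h
  have e : (1+s)*(Real.log (1+s) - Real.log (1+t)) =
      ((1+s)*Real.log (1+s) - s*Real.log s) - ((1+s)*Real.log (1+t) - s*Real.log t)
        + s*(Real.log s - Real.log t) := by ring
  linarith

private lemma Rmono_s {t s₁ s₂ : ℝ} (ht : 0 < t) (h1 : t < s₁) (h12 : s₁ ≤ s₂) :
    (Real.log (1+s₁) - Real.log (1+t)) / (Real.log s₁ - Real.log t) ≤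
    (Real.log (1+s₂) - Real.log (1+t)) / (Real.log s₂ - Real.log t) := by
  have hD : ∀ σ ∈ Ioi t, HasDerivAt
      (fun s : ℝ => (Real.log (1+s) - Real.log (1+t)) / (Real.log s - Real.log t))
      ((1/(1+σ) * (Real.log σ - Real.log t) -
        (Real.log (1+σ) - Real.log (1+t)) * σ⁻¹) / (Real.log σ - Real.log t)^2) σ := by
    intro σ hσ
    have hσ0 : 0 < σ := ht.trans hσ
    have hN : 0 < Real.log σ - Real.log t := sub_pos.2 (Real.log_lt_log ht hσ)
    have hEd : HasDerivAt (fun s : ℝ => Real.log (1+s) - Real.log (1+t)) (1/(1+σ)) σ :=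
      (((hasDerivAt_id σ).const_add 1).log (by positivity)).sub_const _
    have hNd : HasDerivAt (fun s : ℝ => Real.log s - Real.log t) σ⁻¹ σ :=
      (Real.hasDerivAt_log hσ0.ne').sub_const _
    exact hEd.div hNd hN.ne'
  have key : MonotoneOn
      (fun s : ℝ => (Real.log (1+s) - Real.log (1+t)) / (Real.log s - Real.log t))
      (Ioi t) := by
    apply monotoneOn_of_deriv_nonneg (convex_Ioi t)
    · intro σ hσ; exact (hD σ hσ).continuousAt.continuousWithinAt
    · rw [interior_Ioi]
      intro σ hσ; exact (hD σ hσ).differentiableAt.differentiableWithinAt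
    · rw [interior_Ioi]
      intro σ hσ
      rw [(hD σ hσ).deriv]
      have hσ0 : 0 < σ := ht.trans hσ
      have hN : 0 < Real.log σ - Real.log t := sub_pos.2 (Real.log_lt_log ht hσ)
      apply div_nonneg _ (sq_nonneg _)
      have hP := P2 ht (le_of_lt hσ)
      have e1 : (Real.log (1+σ) - Real.log (1+t)) * σ⁻¹
          = (Real.log (1+σ) - Real.log (1+t))/σ := by rw [div_eq_mul_inv]
      have e2 : 1/(1+σ) * (Real.log σ - Real.log t)
          = (Real.log σ - Real.log t)/(1+σ) := by ring
      rw [sub_nonneg, e1, e2, div_le_div_iff₀ hσ0 (by positivity)]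
      nlinarith [hP]
  exact key (mem_Ioi.2 h1) (mem_Ioi.2 (h1.trans_le h12)) h12

private lemma Rmono_t {t₁ t₂ c : ℝ} (h0 : 0 < t₁) (h12 : t₁ ≤ t₂) (h2c : t₂ < c) :
    (Real.log (1+c) - Real.log (1+t₁)) / (Real.log c - Real.log t₁) ≤
    (Real.log (1+c) - Real.log (1+t₂)) / (Real.log c - Real.log t₂) := by
  have hD : ∀ τ ∈ Ioo (0:ℝ) c, HasDerivAt
      (fun τ : ℝ => (Real.log (1+c) - Real.log (1+τ)) / (Real.log c - Real.log τ))
      ((-(1/(1+τ)) * (Real.log c - Real.log τ) -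
        (Real.log (1+c) - Real.log (1+τ)) * -τ⁻¹) / (Real.log c - Real.log τ)^2) τ := by
    intro τ hτ
    have hN : 0 < Real.log c - Real.log τ := sub_pos.2 (Real.log_lt_log hτ.1 hτ.2)
    have hEd : HasDerivAt (fun τ : ℝ => Real.log (1+c) - Real.log (1+τ)) (-(1/(1+τ))) τ :=
      (((hasDerivAt_id τ).const_add 1).log (by intro h; simp only [id_eq] at h; linarith [hτ.1])).const_sub _
    have hNd : HasDerivAt (fun τ : ℝ => Real.log c - Real.log τ) (-τ⁻¹) τ :=
      (Real.hasDerivAt_log hτ.1.ne').const_sub _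
    exact hEd.div hNd hN.ne'
  have key : MonotoneOn
      (fun τ : ℝ => (Real.log (1+c) - Real.log (1+τ)) / (Real.log c - Real.log τ))
      (Ioo (0:ℝ) c) := by
    apply monotoneOn_of_deriv_nonneg (convex_Ioo (0:ℝ) c)
    · intro τ hτ; exact (hD τ hτ).continuousAt.continuousWithinAt
    · rw [interior_Ioo]
      intro τ hτ; exact (hD τ hτ).differentiableAt.differentiableWithinAt
    · rw [interior_Ioo]
      intro τ hτ
      rw [(hD τ hτ).deriv]
      have hN : 0 < Real.log c - Real.log τ := sub_pos.2 (Real.log_lt_log hτ.1 hτ.2)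
      apply div_nonneg _ (sq_nonneg _)
      have hP := P1 hτ.1 (le_of_lt hτ.2)
      have hτ1 : (0:ℝ) < 1 + τ := by nlinarith [hτ.1]
      have e1 : -(1/(1+τ)) * (Real.log c - Real.log τ) -
          (Real.log (1+c) - Real.log (1+τ)) * -τ⁻¹
          = (Real.log (1+c) - Real.log (1+τ))/τ - (Real.log c - Real.log τ)/(1+τ) := by
        rw [div_eq_mul_inv, div_eq_mul_inv, div_eq_mul_inv]; ring
      rw [e1, sub_nonneg, div_le_div_iff₀ hτ1 hτ.1]
      nlinarith [hP]
  exact key (mem_Ioo.2 ⟨h0, h12.trans_lt h2c⟩) (mem_Ioo.2 ⟨h0.trans_le h12, h2c⟩) h12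

private lemma Dpos {t s : ℝ} (ht : 0 < t) (hts : t < s) :
    0 < (Real.log s - Real.log (1+s)) - (Real.log t - Real.log (1+t)) := by
  have hs : 0 < s := ht.trans hts
  have h1 : Real.log ((1+s)*t) < Real.log (s*(1+t)) :=
    Real.log_lt_log (by positivity) (by nlinarith)
  rw [Real.log_mul (by positivity) ht.ne', Real.log_mul hs.ne' (by positivity)] at h1
  linarith

private lemma termA {b c t s α : ℝ} (hb : 0 < b) (hbc : b < c) (ht : 0 < t)
    (hts : t < s) (hsc : s ≤ c) (htb : t ≤ b)
    (hα : 2 * ((Real.log c - Real.log b) /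
        ((Real.log c - Real.log (1+c)) - (Real.log b - Real.log (1+b)))) ≤ α) :
    (t/(t+1)) ^ α ≤ t^2/s^2 * ((s/(s+1)) ^ α) := by
  have hs0 : 0 < s := ht.trans hts
  have hc0 : 0 < c := hb.trans hbc
  have hNts : 0 < Real.log s - Real.log t := sub_pos.2 (Real.log_lt_log ht hts)
  have hNbc : 0 < Real.log c - Real.log b := sub_pos.2 (Real.log_lt_log hb hbc)
  have hDts := Dpos ht hts
  have hDbc := Dpos hb hbc
  -- R chain
  have hR1 := Rmono_s ht hts hsc
  have hR2 := Rmono_t ht htb hbc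
  have hR : (Real.log (1+s) - Real.log (1+t)) / (Real.log s - Real.log t) ≤
      (Real.log (1+c) - Real.log (1+b)) / (Real.log c - Real.log b) := hR1.trans hR2
  have hcross : (Real.log (1+s) - Real.log (1+t)) * (Real.log c - Real.log b) ≤
      (Real.log (1+c) - Real.log (1+b)) * (Real.log s - Real.log t) :=
    (div_le_div_iff₀ hNts hNbc).mp hR
  have hND : (Real.log s - Real.log t) *
      ((Real.log c - Real.log (1+c)) - (Real.log b - Real.log (1+b))) ≤
      (Real.log c - Real.log b) *
      ((Real.log s - Real.log (1+s)) - (Real.log t - Real.log (1+t))) := by nlinarith [hcross]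
  -- α * Dts ≥ 2 * Nts
  have hq : 0 ≤ α := le_trans (by positivity) hα
  have e1 : Real.log s - Real.log t ≤ ((Real.log c - Real.log b) /
      ((Real.log c - Real.log (1+c)) - (Real.log b - Real.log (1+b)))) *
      ((Real.log s - Real.log (1+s)) - (Real.log t - Real.log (1+t))) := by
    rw [div_mul_eq_mul_div, le_div_iff₀ hDbc]
    nlinarith [hND]
  have hαD : 2 * (Real.log s - Real.log t) ≤
      α * ((Real.log s - Real.log (1+s)) - (Real.log t - Real.log (1+t))) := by
    have h2 := mul_le_mul_of_nonneg_right hα hDts.le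
    nlinarith [e1]
  -- rpow form
  have hft : 0 < t/(t+1) := by positivity
  have hfs : 0 < s/(s+1) := by positivity
  rw [Real.rpow_def_of_pos hft, Real.rpow_def_of_pos hfs]
  have ht2 : t^2/s^2 = Real.exp (2*Real.log t - 2*Real.log s) := by
    rw [Real.exp_sub]
    rw [show (2:ℝ)*Real.log t = Real.log (t^2) by
      rw [Real.log_pow]; norm_num]
    rw [show (2:ℝ)*Real.log s = Real.log (s^2) by
      rw [Real.log_pow]; norm_num]
    rw [Real.exp_log (by positivity), Real.exp_log (by positivity)]
  rw [ht2, ← Real.exp_add, Real.exp_le_exp]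
  rw [Real.log_div ht.ne' (by positivity), Real.log_div hs0.ne' (by positivity)]
  have a1 : Real.log (t+1) = Real.log (1+t) := by rw [add_comm]
  have a2 : Real.log (s+1) = Real.log (1+s) := by rw [add_comm]
  rw [a1, a2]
  nlinarith [hαD]

theorem stmt_9 (a b α : ℝ) (ha : 0 < a) (hab : a ≤ b)
    (hα : α ≥ 2 * Real.logb
      ((1 + Real.sqrt (a ^ 2 + b ^ 2)) * (b / Real.sqrt (a ^ 2 + b ^ 2)) /
        (1 + Real.sqrt (a ^ 2 + b ^ 2) * (b / Real.sqrt (a ^ 2 + b ^ 2))))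
      (b / Real.sqrt (a ^ 2 + b ^ 2))) :
    ∀ x y : ℝ, 0 ≤ x → x ≤ a → 0 ≤ y → y ≤ b →
      (x / (x + 1)) ^ α + (y / (y + 1)) ^ α ≤
        (Real.sqrt (x ^ 2 + y ^ 2) / (Real.sqrt (x ^ 2 + y ^ 2) + 1)) ^ α := by
  intro x y hx hxa hy hyb
  have hb : 0 < b := ha.trans_le hab
  set c : ℝ := Real.sqrt (a ^ 2 + b ^ 2) with hc_def
  have hc2 : c ^ 2 = a ^ 2 + b ^ 2 := Real.sq_sqrt (by positivity)
  have hc0 : 0 < c := Real.sqrt_pos.2 (by positivity)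
  have hbc : b < c := by
    nlinarith [hc2, sq_nonneg (b - c), sq_nonneg a]
  have hNbc : 0 < Real.log c - Real.log b := sub_pos.2 (Real.log_lt_log hb hbc)
  have hDbc := Dpos hb hbc
  -- convert hα
  have hα' : 2 * ((Real.log c - Real.log b) /
      ((Real.log c - Real.log (1+c)) - (Real.log b - Real.log (1+b)))) ≤ α := by
    have hcb : c * (b / c) = b := by field_simp
    have hB : (1 + c) * (b / c) / (1 + c * (b / c)) = b * (1+c) / (c * (1+b)) := by
      rw [hcb]; field_simp
    have hlogb : Real.logb ((1 + c) * (b / c) / (1 + c * (b / c))) (b / c)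
        = (Real.log c - Real.log b) /
          ((Real.log c - Real.log (1+c)) - (Real.log b - Real.log (1+b))) := by
      rw [hB, Real.logb, Real.log_div hb.ne' hc0.ne',
        Real.log_div (by positivity) (by positivity),
        Real.log_mul hb.ne' (by positivity), Real.log_mul hc0.ne' (by positivity)]
      rw [show Real.log b - Real.log c = -(Real.log c - Real.log b) by ring,
        show Real.log b + Real.log (1+c) - (Real.log c + Real.log (1+b)) =
          -((Real.log c - Real.log (1+c)) - (Real.log b - Real.log (1+b))) by ring,
        neg_div_neg_eq]
    rw [ge_iff_le, hlogb] at hα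
    exact hα
  have hαpos : 0 < α := lt_of_lt_of_le (by positivity) hα'
  rcases eq_or_lt_of_le hx with hx0 | hx0
  · -- x = 0
    have hxe : x = 0 := hx0.symm
    subst hxe
    have hsy : Real.sqrt (0 ^ 2 + y ^ 2) = y := by
      rw [show (0:ℝ)^2 + y^2 = y^2 by ring, Real.sqrt_sq hy]
    rw [hsy]
    simp [Real.zero_rpow hαpos.ne']
  rcases eq_or_lt_of_le hy with hy0 | hy0
  · -- y = 0
    have hye : y = 0 := hy0.symm
    subst hye
    have hsx : Real.sqrt (x ^ 2 + 0 ^ 2) = x := by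
      rw [show x^2 + (0:ℝ)^2 = x^2 by ring, Real.sqrt_sq hx]
    rw [hsx]
    simp [Real.zero_rpow hαpos.ne']
  -- main case
  set s : ℝ := Real.sqrt (x ^ 2 + y ^ 2) with hs_def
  have hs2 : s ^ 2 = x ^ 2 + y ^ 2 := Real.sq_sqrt (by positivity)
  have hs0 : 0 < s := Real.sqrt_pos.2 (by positivity)
  have hxs : x < s := by nlinarith [hs2, sq_nonneg (x - s)]
  have hys : y < s := by nlinarith [hs2, sq_nonneg (y - s)]
  have hsc : s ≤ c := by
    apply Real.sqrt_le_sqrt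
    have h1 : x ^ 2 ≤ a ^ 2 := by nlinarith
    have h2 : y ^ 2 ≤ b ^ 2 := by nlinarith
    linarith
  have t1 := termA hb hbc hx0 hxs hsc (hxa.trans hab) hα'
  have t2 := termA hb hbc hy0 hys hsc hyb hα'
  have hsum : x^2/s^2 + y^2/s^2 = 1 := by
    rw [← add_div, ← hs2, div_self (by positivity)]
  have hfs : (0:ℝ) ≤ (s/(s+1)) ^ α := Real.rpow_nonneg (by positivity) α
  calc (x / (x + 1)) ^ α + (y / (y + 1)) ^ α
      ≤ x^2/s^2 * ((s/(s+1)) ^ α) + y^2/s^2 * ((s/(s+1)) ^ α) := add_le_add t1 t2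
    _ = (x^2/s^2 + y^2/s^2) * ((s/(s+1)) ^ α) := by ring
    _ = (s/(s+1)) ^ α := by rw [hsum, one_mul]
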